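/- Let W ⊂ U and Z ⊂ V be finite-dimensional subspaces. A pair (u_{W,Z}, r_{W,Z}) ∈ W × Z solves the discrete saddle point problem (r_{W,Z}, v)_V + b(u_{W,Z}, v) = ⟨f, v⟩ for all v ∈ Z and b(w, r_{W,Z}) = 0 for all w ∈ W, if and only if u_{W,Z} solves the Petrov–Galerkin problem b(u_{W,Z}, v) = ⟨f, v⟩ for all v ∈ P_{V,Z}(R_V B(W)), where P_{V,Z} is the V-orthogonal projection onto Z. -/

import Mathlib

open Metric InnerProductSpace RealInnerProductSpace

private lemma proj_inner_eq_left {V : Type*} [NormedAddCommGroup V] [InnerProductSpace ℝ V]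
    (Z : Submodule ℝ V) [Submodule.HasOrthogonalProjection Z] (x v : V) (hv : v ∈ Z) :
    ⟪((Submodule.orthogonalProjection Z x : Z) : V), v⟫_ℝ = ⟪x, v⟫_ℝ := by
  exact Submodule.inner_orthogonalProjectionOnto_eq_of_mem_right (K := Z) ⟨v, hv⟩ x

private lemma proj_inner_eq_right {V : Type*} [NormedAddCommGroup V] [InnerProductSpace ℝ V]
    (Z : Submodule ℝ V) [Submodule.HasOrthogonalProjection Z] (x v : V) (hv : v ∈ Z) :
    ⟪v, ((Submodule.orthogonalProjection Z x : Z) : V)⟫_ℝ = ⟪v, x⟫_ℝ := by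
  rw [real_inner_comm, proj_inner_eq_left Z x v hv, real_inner_comm]

/-- Theorem `thm:saddle` (i): for finite-dimensional `W ⊂ U`,
`Z ⊂ V`, the pair `(u_{W,Z}, r_{W,Z}) ∈ W × Z` solves the discrete saddle point problem
`(r,v)_V + b(u_{W,Z},v) = ⟨f,v⟩ ∀ v ∈ Z`, `b(w,r) = 0 ∀ w ∈ W`,
iff `u_{W,Z}` solves the Petrov–Galerkin problem with test space
`P_{V,Z}(R_V B(W))`, `P_{V,Z}` being the `V`-orthogonal projection onto `Z`. -/
theorem discrete_saddle_point_equiv_petrovGalerkin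
    {U V : Type*} [NormedAddCommGroup U] [InnerProductSpace ℝ U] [CompleteSpace U]
    [NormedAddCommGroup V] [InnerProductSpace ℝ V] [CompleteSpace V]
    (B : U ≃L[ℝ] (V →L[ℝ] ℝ)) (f : V →L[ℝ] ℝ)
    (W : Submodule ℝ U) [FiniteDimensional ℝ W]
    (Z : Submodule ℝ V) [FiniteDimensional ℝ Z]
    (uWZ : U) (huWZ : uWZ ∈ W) :
    (∃ rWZ ∈ Z, (∀ v ∈ Z, ⟪rWZ, v⟫_ℝ + (B uWZ) v = f v) ∧ ∀ w ∈ W, (B w) rWZ = 0) ↔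
      (∀ w ∈ W,
        (B uWZ) ((Submodule.orthogonalProjection Z ((toDual ℝ V).symm (B w)) : Z) : V) =
          f ((Submodule.orthogonalProjection Z ((toDual ℝ V).symm (B w)) : Z) : V)) := by
  constructor
  · rintro ⟨r, hrZ, h1, h2⟩ w hw
    set p : V := ((Submodule.orthogonalProjection Z ((toDual ℝ V).symm (B w)) : Z) : V) with hp
    have hpZ : p ∈ Z := Submodule.coe_mem _
    have hr0 : ⟪r, p⟫_ℝ = 0 := by
      rw [hp, proj_inner_eq_right Z _ r hrZ, real_inner_comm, toDual_symm_apply, h2 w hw]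
    linarith [h1 p hpZ]
  · intro h
    set g : V →L[ℝ] ℝ := f - B uWZ with hg
    refine ⟨((Submodule.orthogonalProjection Z ((toDual ℝ V).symm g) : Z) : V), Submodule.coe_mem _,
      ?_, ?_⟩
    · intro v hv
      rw [proj_inner_eq_left Z _ v hv, toDual_symm_apply]
      simp [hg]
    · intro w hw
      have key : (B w) ((Submodule.orthogonalProjection Z ((toDual ℝ V).symm g) : Z) : V)
          = ⟪(toDual ℝ V).symm (B w),
              ((Submodule.orthogonalProjection Z ((toDual ℝ V).symm g) : Z) : V)⟫_ℝ := by
        rw [toDual_symm_apply]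
      rw [key, ← proj_inner_eq_left Z ((toDual ℝ V).symm (B w)) _ (Submodule.coe_mem _),
        proj_inner_eq_right Z ((toDual ℝ V).symm g) _ (Submodule.coe_mem _),
        real_inner_comm, toDual_symm_apply]
      have := h w hw
      simp [hg]
      exact sub_eq_zero.mpr this.symm
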